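/- For r ∈ [0,1] define the 3×3 complex matrix h_r(z,w) = [[zw + w, z − (1+r)/2, 0], [z − (1+r)/2, z w⁻¹ + ((1+r)/2) w⁻¹ + r, 1], [0, 1, z⁻¹]]. Then for every r ∈ [0,1] and all z, w ∈ ℂ with |z| = 1 and |w| = 1, det h_r(z,w) ≠ 0; that is, each h_r is a nonsingular matrix-valued function on the two-torus 𝕋². -/

import Mathlib

open Complex Matrix

/-- The bulk-gap-preserving deformation `h_r` of the off-diagonal block of the two-dimensional
model Hamiltonian of Section 5.1. -/
noncomputable def hDeform (r : ℝ) (z w : ℂ) : Matrix (Fin 3) (Fin 3) ℂ :=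
  !![z * w + w, z - (1 + (r : ℂ)) / 2, 0;
     z - (1 + (r : ℂ)) / 2, z * w⁻¹ + ((1 + (r : ℂ)) / 2) * w⁻¹ + (r : ℂ), 1;
     0, 1, z⁻¹]


private lemma hDeform_aux (r c A B : ℝ) (hr0 : 0 ≤ r) (hr1 : r ≤ 1)
    (hc1 : c ≤ 1) (hA0 : 0 ≤ A) (hB0 : 0 ≤ B) (hBle : B ≤ 1 + r)
    (hA2 : A ^ 2 = 2 + 2 * c) (hB2 : B ^ 2 = 1 + r ^ 2 - 2 * r * c) :
    A * B < (3 + r) ^ 2 / 4 := by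
  rcases le_or_gt r (1/2) with h | h
  · have hAle : A ≤ 2 := by nlinarith
    have hab : A * B ≤ 2 * (1 + r) :=
      le_of_le_of_eq (mul_le_mul hAle hBle hB0 (by norm_num : (0:ℝ) ≤ 2)) (by ring)
    nlinarith [hab, mul_pos (show (0:ℝ) < 1 - r by linarith) (show (0:ℝ) < 1 - r by linarith)]
  · nlinarith [sq_nonneg (A - B),
      mul_nonneg (sub_nonneg.2 hr1) (sub_nonneg.2 hc1),
      mul_nonneg hr0 (sub_nonneg.2 hr1)]

set_option maxHeartbeats 1000000 in
/-- Each `h_r`, `r ∈ [0,1]`, is a nonsingular matrix-valued function on the two-torus. -/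
theorem hDeform_det_ne_zero_on_torus :
    ∀ r : ℝ, 0 ≤ r → r ≤ 1 → ∀ z w : ℂ, ‖z‖ = 1 → ‖w‖ = 1 →
      (hDeform r z w).det ≠ 0 := by
  intro r hr0 hr1 z w hz hw hdet
  have hz0 : z ≠ 0 := by intro h; simp [h] at hz
  have hw0 : w ≠ 0 := by intro h; simp [h] at hw
  have hd := hdet
  simp only [hDeform, Matrix.det_fin_three, Matrix.of_apply, Matrix.cons_val', Matrix.cons_val_zero,
    Matrix.cons_val_one, Matrix.cons_val_two, Matrix.empty_val', Matrix.cons_val_fin_one, Matrix.head_cons, Matrix.tail_cons,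
    Matrix.head_fin_const] at hd
  field_simp at hd
  have key' : ((8:ℂ)*w^2*z) *
      ((((5+3*r)/2 : ℝ):ℂ) * z + (((1-r^2)/4 : ℝ):ℂ) + w*(z+1)*((r:ℂ)-z)) = 0 := by
    push_cast
    linear_combination 2 * w * z * hd
  have key : (((5+3*r)/2 : ℝ):ℂ) * z + (((1-r^2)/4 : ℝ):ℂ) + w*(z+1)*((r:ℂ)-z) = 0 := by
    rcases mul_eq_zero.mp key' with h | h
    · exact absurd h (mul_ne_zero (mul_ne_zero (by norm_num) (pow_ne_zero _ hw0)) hz0)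
    · exact h
  clear hd key' hdet
  -- norms
  set A : ℝ := ‖z + 1‖ with hA
  set B : ℝ := ‖(r:ℂ) - z‖ with hB
  have hA0 : 0 ≤ A := norm_nonneg _
  have hB0 : 0 ≤ B := norm_nonneg _
  have hc : |z.re| ≤ 1 := by
    have := Complex.abs_re_le_norm z
    rwa [hz] at this
  have hc1 : z.re ≤ 1 := (abs_le.mp hc).2
  have hz2 : z.re^2 + z.im^2 = 1 := by
    have h1 : ‖z‖^2 = 1 := by rw [hz]; norm_num
    rw [Complex.sq_norm, Complex.normSq_apply] at h1
    nlinarith [h1]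
  have hA2 : A^2 = 2 + 2 * z.re := by
    rw [hA, Complex.sq_norm, Complex.normSq_apply]
    simp only [Complex.add_re, Complex.add_im, Complex.one_re, Complex.one_im]
    nlinarith [hz2]
  have hB2 : B^2 = 1 + r^2 - 2*r*z.re := by
    rw [hB, Complex.sq_norm, Complex.normSq_apply]
    simp only [Complex.sub_re, Complex.sub_im, Complex.ofReal_re, Complex.ofReal_im]
    nlinarith [hz2]
  have hBle : B ≤ 1 + r := by
    rw [hB]
    calc ‖(r:ℂ) - z‖ ≤ ‖(r:ℂ)‖ + ‖z‖ := norm_sub_le _ _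
    _ = 1 + r := by rw [hz, Complex.norm_real, Real.norm_eq_abs, _root_.abs_of_nonneg hr0]; ring
  have hAB : A * B < (3+r)^2/4 :=
    hDeform_aux r z.re A B hr0 hr1 hc1 hA0 hB0 hBle hA2 hB2
  -- combine
  have h1 : (((5+3*r)/2:ℝ):ℂ)*z = -((((1-r^2)/4:ℝ):ℂ) + w*(z+1)*((r:ℂ)-z)) := by
    linear_combination key
  have h2 : (5+3*r)/2 ≤ (1-r^2)/4 + A*B := by
    have e1 : ‖(((5+3*r)/2:ℝ):ℂ)*z‖ = (5+3*r)/2 := by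
      rw [norm_mul, Complex.norm_real, hz, mul_one, Real.norm_eq_abs, _root_.abs_of_nonneg (by linarith)]
    have e2 : ‖(((1-r^2)/4:ℝ):ℂ)‖ = (1-r^2)/4 := by
      rw [Complex.norm_real, Real.norm_eq_abs, _root_.abs_of_nonneg (by nlinarith)]
    have e3 : ‖w*(z+1)*((r:ℂ)-z)‖ = A*B := by
      rw [norm_mul, norm_mul, hw, one_mul]
    calc (5+3*r)/2 = ‖(((5+3*r)/2:ℝ):ℂ)*z‖ := e1.symm
    _ = ‖(((1-r^2)/4:ℝ):ℂ) + w*(z+1)*((r:ℂ)-z)‖ := by rw [h1, norm_neg]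
    _ ≤ ‖(((1-r^2)/4:ℝ):ℂ)‖ + ‖w*(z+1)*((r:ℂ)-z)‖ := norm_add_le _ _
    _ = (1-r^2)/4 + A*B := by rw [e2, e3]
  nlinarith [hAB, h2]
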